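/- Let k ≥ 2, 2 ≤ ℓ ≤ k, and let H be a k-uniform hypergraph whose vertex set is the union of ℓ pairwise disjoint edges M_1, …, M_ℓ (each of size k) forming a perfect matching of H. Suppose this perfect matching is unique. Then for every type vector a = (a_1 ≥ ⋯ ≥ a_ℓ ≥ 1) with Σa_i = k, the number of edges of H of type a is at most ((ℓ-1)/ℓ)·|G_a|, where G_a is the set of all k-subsets of the vertex set having type a. -/

import Mathlib

open Finset

lemma exists_bijOn_of_card_eq {α : Type*} [DecidableEq α] {s t : Finset α}
    (h : s.card = t.card) : ∃ f : α → α, Set.BijOn f ↑s ↑t := by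
  classical
  obtain ⟨e⟩ : Nonempty ((s : Finset α) ≃ (t : Finset α)) :=
    ⟨Finset.equivOfCardEq h⟩
  refine ⟨fun x => if hx : x ∈ s then (e ⟨x, hx⟩ : α) else x, ?_, ?_, ?_⟩
  · intro x hx
    simp only [Finset.mem_coe] at hx
    simp only [hx, dif_pos]
    exact (e ⟨x, hx⟩).2
  · intro x hx y hy hxy
    simp only [Finset.mem_coe] at hx hy
    simp only [hx, hy, dif_pos] at hxy
    have := e.injective (Subtype.ext hxy)
    exact congrArg Subtype.val this
  · intro y hy
    simp only [Finset.mem_coe] at hy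
    refine ⟨(e.symm ⟨y, hy⟩ : α), ?_, ?_⟩
    · exact (e.symm ⟨y, hy⟩).2
    · simp only [(e.symm ⟨y, hy⟩).2, dif_pos]
      simp


lemma exists_partition_of_sizes {α β : Type*} [DecidableEq α] [DecidableEq β]
    (s : Finset β) (f : β → ℕ) :
    ∀ S : Finset α, S.card = ∑ p ∈ s, f p →
    ∃ B : β → Finset α, (∀ p ∈ s, (B p).card = f p) ∧ (∀ p ∈ s, B p ⊆ S) ∧
      (∀ p ∈ s, ∀ q ∈ s, p ≠ q → Disjoint (B p) (B q)) ∧ s.biUnion B = S := by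
  classical
  induction s using Finset.induction_on with
  | empty =>
      intro S hS
      simp only [Finset.sum_empty] at hS
      refine ⟨fun _ => ∅, by simp, by simp, by simp, ?_⟩
      simp [Finset.card_eq_zero.mp hS]
  | @insert p₀ s' hp₀ ih =>
      intro S hS
      rw [Finset.sum_insert hp₀] at hS
      obtain ⟨T, hTS, hTcard⟩ : ∃ T ⊆ S, T.card = f p₀ :=
        Finset.exists_subset_card_eq (by omega)
      have hrest : (S \ T).card = ∑ p ∈ s', f p := by
        rw [Finset.card_sdiff_of_subset hTS]; omega
      obtain ⟨B', h1, h2, h3, h4⟩ := ih (S \ T) hrest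
      refine ⟨fun p => if p = p₀ then T else B' p, ?_, ?_, ?_, ?_⟩
      · intro p hp
        rcases Finset.mem_insert.mp hp with rfl | hp'
        · simp [hTcard]
        · have : p ≠ p₀ := fun h => hp₀ (h ▸ hp')
          simp [this, h1 p hp']
      · intro p hp
        rcases Finset.mem_insert.mp hp with rfl | hp'
        · simpa using hTS
        · have hne : p ≠ p₀ := fun h => hp₀ (h ▸ hp')
          simp only [if_neg hne]
          exact (h2 p hp').trans Finset.sdiff_subset
      · intro p hp q hq hpq
        have key : ∀ r ∈ s', Disjoint T (B' r) := by
          intro r hr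
          exact Finset.disjoint_left.mpr fun x hx hx' =>
            (Finset.mem_sdiff.mp (h2 r hr hx')).2 hx
        rcases Finset.mem_insert.mp hp with rfl | hp' <;>
          rcases Finset.mem_insert.mp hq with rfl | hq'
        · exact absurd rfl hpq
        · have : q ≠ p := fun h => hp₀ (h ▸ hq')
          simpa [this] using key q hq'
        · have : p ≠ q := fun h => hp₀ (h ▸ hp')
          simpa [this] using (key p hp').symm
        · have h1' : p ≠ p₀ := fun h => hp₀ (h ▸ hp')
          have h2' : q ≠ p₀ := fun h => hp₀ (h ▸ hq')
          simpa [h1', h2'] using h3 p hp' q hq' hpq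
      · rw [Finset.biUnion_insert]
        have : (s'.biUnion fun p => if p = p₀ then T else B' p) = s'.biUnion B' := by
          apply Finset.biUnion_congr rfl
          intro p hp
          have : p ≠ p₀ := fun h => hp₀ (h ▸ hp)
          simp [this]
        rw [if_pos rfl, this, h4]
        rw [Finset.union_sdiff_of_subset hTS]

lemma exists_cover {α : Type*} [DecidableEq α] (k l : ℕ) [NeZero l]
    (M : Fin l → Finset α)
    (hdisj : ∀ i j, i ≠ j → Disjoint (M i) (M j))
    (hcard : ∀ i, (M i).card = k)
    (V : Finset α) (hV : V = Finset.univ.biUnion M)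
    (a : Fin l → ℕ) (hsum : ∑ i, a i = k)
    (C : Finset α) (hCV : C ⊆ V)
    (σ : Equiv.Perm (Fin l)) (hσ : ∀ i, (C ∩ M (σ i)).card = a i) :
    ∃ Cp : Fin l → Finset α, Cp 0 = C ∧ (∀ p, Cp p ⊆ V) ∧ (∀ p, (Cp p).card = k) ∧
      (∀ p, ∃ τ : Equiv.Perm (Fin l), ∀ i, (Cp p ∩ M (τ i)).card = a i) ∧
      (∀ p q, p ≠ q → Disjoint (Cp p) (Cp q)) ∧
      (Finset.univ : Finset (Fin l)).biUnion Cp = V := by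
  classical
  have hMV : ∀ j, M j ⊆ V := fun j => hV ▸ Finset.subset_biUnion_of_mem M (mem_univ j)
  have huniqM : ∀ x (i j : Fin l), x ∈ M i → x ∈ M j → i = j := by
    intro x i j hi hj
    by_contra hne
    exact Finset.disjoint_left.mp (hdisj i j hne) hi hj
  have hCM : ∀ j, (C ∩ M j).card = a (σ.symm j) := by
    intro j
    have := hσ (σ.symm j)
    rwa [Equiv.apply_symm_apply] at this
  have haK : ∀ t : Fin l, ∑ p : Fin l, a (t + p) = k := by
    intro t
    rw [← hsum]
    exact Fintype.sum_equiv (Equiv.addLeft t) _ _ (fun p => rfl)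
  have hak : ∀ t : Fin l, a t ≤ k := by
    intro t
    rw [← hsum]
    exact Finset.single_le_sum (fun i _ => Nat.zero_le _) (mem_univ t)
  have hsd : ∀ j, (M j \ C).card = ∑ p ∈ (univ : Finset (Fin l)).erase 0,
      a (σ.symm j + p) := by
    intro j
    have h1 : (M j ∩ C).card + (M j \ C).card = (M j).card :=
      Finset.card_inter_add_card_sdiff _ _
    rw [Finset.inter_comm, hCM j, hcard j] at h1
    have h0 : a (σ.symm j + 0) + ∑ p ∈ (univ : Finset (Fin l)).erase 0, a (σ.symm j + p)
        = ∑ p : Fin l, a (σ.symm j + p) :=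
      Finset.add_sum_erase (univ : Finset (Fin l)) (fun p => a (σ.symm j + p)) (mem_univ 0)
    rw [haK (σ.symm j), add_zero] at h0
    have := hak (σ.symm j)
    omega
  have hpart := fun j => exists_partition_of_sizes ((univ : Finset (Fin l)).erase 0)
    (fun p => a (σ.symm j + p)) (M j \ C) (hsd j)
  choose B hB1 hB2 hB3 hB4 using hpart
  set Bf : Fin l → Fin l → Finset α := fun j p => if p = 0 then C ∩ M j else B j p with hBf
  have hBfM : ∀ j p, Bf j p ⊆ M j := by
    intro j p
    by_cases hp : p = 0
    · simp [hBf, hp]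
    · simp only [hBf, if_neg hp]
      exact (hB2 j p (Finset.mem_erase.mpr ⟨hp, mem_univ p⟩)).trans Finset.sdiff_subset
  have hBfcard : ∀ j p, (Bf j p).card = a (σ.symm j + p) := by
    intro j p
    by_cases hp : p = 0
    · simp [hBf, hp, hCM j]
    · simp only [hBf, if_neg hp]
      exact hB1 j p (Finset.mem_erase.mpr ⟨hp, mem_univ p⟩)
  have hBfdisj : ∀ j p q, p ≠ q → Disjoint (Bf j p) (Bf j q) := by
    intro j p q hpq
    by_cases hp : p = 0 <;> by_cases hq : q = 0
    · exact absurd (hp.trans hq.symm) hpq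
    · simp only [hBf, if_pos hp, if_neg hq]
      refine Finset.disjoint_left.mpr fun x hx hx' => ?_
      exact (Finset.mem_sdiff.mp (hB2 j q (Finset.mem_erase.mpr ⟨hq, mem_univ q⟩) hx')).2
        (Finset.mem_inter.mp hx).1
    · simp only [hBf, if_neg hp, if_pos hq]
      refine Finset.disjoint_right.mpr fun x hx hx' => ?_
      exact (Finset.mem_sdiff.mp (hB2 j p (Finset.mem_erase.mpr ⟨hp, mem_univ p⟩) hx')).2
        (Finset.mem_inter.mp hx).1
    · simp only [hBf, if_neg hp, if_neg hq]
      exact hB3 j p (Finset.mem_erase.mpr ⟨hp, mem_univ p⟩) q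
        (Finset.mem_erase.mpr ⟨hq, mem_univ q⟩) hpq
  have hBfU : ∀ j, (univ : Finset (Fin l)).biUnion (fun p => Bf j p) = M j := by
    intro j
    have h0 : (univ : Finset (Fin l)) = insert 0 (univ.erase 0) :=
      (Finset.insert_erase (mem_univ 0)).symm
    rw [h0, Finset.biUnion_insert]
    have : ((univ : Finset (Fin l)).erase 0).biUnion (fun p => Bf j p)
        = ((univ : Finset (Fin l)).erase 0).biUnion (B j) := by
      apply Finset.biUnion_congr rfl
      intro p hp
      simp [hBf, (Finset.mem_erase.mp hp).1]
    rw [this, hB4 j]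
    simp only [hBf, if_pos rfl]
    rw [Finset.inter_comm]
    exact sup_inf_sdiff _ _
  refine ⟨fun p => univ.biUnion (fun j => Bf j p), ?_, ?_, ?_, ?_, ?_, ?_⟩
  · -- Cp 0 = C
    ext x
    simp only [Finset.mem_biUnion, mem_univ, true_and, hBf, if_pos rfl, Finset.mem_inter]
    constructor
    · rintro ⟨j, hx, _⟩; exact hx
    · intro hx
      have := hCV hx
      rw [hV] at this
      obtain ⟨j, _, hj⟩ := Finset.mem_biUnion.mp this
      exact ⟨j, hx, hj⟩
  · intro p
    intro x hx
    obtain ⟨j, _, hj⟩ := Finset.mem_biUnion.mp hx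
    exact hMV j (hBfM j p hj)
  · intro p
    rw [Finset.card_biUnion]
    · have : ∑ j : Fin l, (Bf j p).card = ∑ j : Fin l, a (σ.symm j + p) :=
        Finset.sum_congr rfl (fun j _ => hBfcard j p)
      rw [this, ← hsum]
      exact Fintype.sum_equiv (σ.symm.trans (Equiv.addRight p)) _ _ (fun j => rfl)
    · intro i _ j _ hij
      exact Finset.disjoint_of_subset_left (hBfM i p)
        (Finset.disjoint_of_subset_right (hBfM j p) (hdisj i j hij))
  · intro p
    refine ⟨(Equiv.subRight p).trans σ, fun i => ?_⟩
    have hint : (univ.biUnion (fun j => Bf j p)) ∩ M (σ (i - p)) = Bf (σ (i - p)) p := by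
      ext x
      simp only [Finset.mem_inter, Finset.mem_biUnion, mem_univ, true_and]
      constructor
      · rintro ⟨⟨j, hj⟩, hxM⟩
        have := huniqM x j (σ (i - p)) (hBfM j p hj) hxM
        exact this ▸ hj
      · intro hx
        exact ⟨⟨σ (i - p), hx⟩, hBfM _ p hx⟩
    show ((univ.biUnion fun j => Bf j p) ∩ M (σ (i - p))).card = a i
    rw [hint, hBfcard, Equiv.symm_apply_apply, sub_add_cancel]
  · intro p q hpq
    refine Finset.disjoint_left.mpr fun x hx hx' => ?_
    obtain ⟨j, _, hj⟩ := Finset.mem_biUnion.mp hx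
    obtain ⟨j', _, hj'⟩ := Finset.mem_biUnion.mp hx'
    have hjj : j = j' := huniqM x j j' (hBfM j p hj) (hBfM j' q hj')
    subst hjj
    exact Finset.disjoint_left.mp (hBfdisj j p q hpq) hj hj'
  · ext x
    simp only [Finset.mem_biUnion, mem_univ, true_and]
    constructor
    · rintro ⟨p, j, hj⟩
      exact hMV j (hBfM j p hj)
    · intro hx
      rw [hV] at hx
      obtain ⟨j, _, hj⟩ := Finset.mem_biUnion.mp hx
      rw [← hBfU j] at hj
      obtain ⟨p, _, hp⟩ := Finset.mem_biUnion.mp hj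
      exact ⟨p, j, hp⟩

lemma exists_transport {α : Type*} [DecidableEq α] (k l : ℕ)
    (M : Fin l → Finset α)
    (hdisj : ∀ i j, i ≠ j → Disjoint (M i) (M j))
    (hcard : ∀ i, (M i).card = k)
    (V : Finset α) (hV : V = Finset.univ.biUnion M)
    (a : Fin l → ℕ)
    (C C' : Finset α) (hCV : C ⊆ V) (hC'V : C' ⊆ V)
    (σ σ' : Equiv.Perm (Fin l))
    (hσ : ∀ i, (C ∩ M (σ i)).card = a i) (hσ' : ∀ i, (C' ∩ M (σ' i)).card = a i) :
    ∃ (π : α → α) (τ : Equiv.Perm (Fin l)), Set.InjOn π ↑V ∧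
      (∀ j, (M j).image π = M (τ j)) ∧ C.image π = C' := by
  classical
  have huniqM : ∀ x (i j : Fin l), x ∈ M i → x ∈ M j → i = j := by
    intro x i j hi hj
    by_contra hne
    exact Finset.disjoint_left.mp (hdisj i j hne) hi hj
  have hmemV : ∀ x ∈ V, ∃ j, x ∈ M j := by
    intro x hx
    rw [hV] at hx
    obtain ⟨j, _, hj⟩ := Finset.mem_biUnion.mp hx
    exact ⟨j, hj⟩
  set τ : Equiv.Perm (Fin l) := σ.symm.trans σ' with hτ
  have hCM : ∀ j, (C ∩ M j).card = a (σ.symm j) := by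
    intro j
    have := hσ (σ.symm j)
    rwa [Equiv.apply_symm_apply] at this
  have hC'M : ∀ j, (C' ∩ M (τ j)).card = a (σ.symm j) := fun j => hσ' (σ.symm j)
  have hsd : ∀ j, (M j \ C).card = (M (τ j) \ C').card := by
    intro j
    have h1 : (M j ∩ C).card + (M j \ C).card = (M j).card :=
      Finset.card_inter_add_card_sdiff _ _
    have h2 : (M (τ j) ∩ C').card + (M (τ j) \ C').card = (M (τ j)).card :=
      Finset.card_inter_add_card_sdiff _ _
    rw [Finset.inter_comm, hCM j, hcard j] at h1
    rw [Finset.inter_comm, hC'M j, hcard (τ j)] at h2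
    omega
  have hin : ∀ j, (C ∩ M j).card = (C' ∩ M (τ j)).card := fun j => (hCM j).trans (hC'M j).symm
  choose f1 hf1 using fun j => exists_bijOn_of_card_eq (hin j)
  choose f2 hf2 using fun j => exists_bijOn_of_card_eq (hsd j)
  set g : Fin l → α → α := fun j x => if x ∈ C then f1 j x else f2 j x with hg
  have hsplit : ∀ j, (↑(M j) : Set α) = ↑(C ∩ M j) ∪ ↑(M j \ C) := by
    intro j
    ext x
    simp only [Finset.coe_inter, Finset.coe_sdiff, Set.mem_union, Set.mem_inter_iff,
      Set.mem_diff, Finset.mem_coe]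
    tauto
  have hsplit' : ∀ j, (↑(M (τ j)) : Set α) = ↑(C' ∩ M (τ j)) ∪ ↑(M (τ j) \ C') := by
    intro j
    ext x
    simp only [Finset.coe_inter, Finset.coe_sdiff, Set.mem_union, Set.mem_inter_iff,
      Set.mem_diff, Finset.mem_coe]
    tauto
  have hgBij : ∀ j, Set.BijOn (g j) ↑(M j) ↑(M (τ j)) := by
    intro j
    rw [hsplit j, hsplit' j]
    have b1 : Set.BijOn (g j) ↑(C ∩ M j) ↑(C' ∩ M (τ j)) := by
      refine (hf1 j).congr ?_
      intro x hx
      simp only [Finset.coe_inter, Set.mem_inter_iff, Finset.mem_coe] at hx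
      simp [hg, hx.1]
    have b2 : Set.BijOn (g j) ↑(M j \ C) ↑(M (τ j) \ C') := by
      refine (hf2 j).congr ?_
      intro x hx
      simp only [Finset.coe_sdiff, Set.mem_diff, Finset.mem_coe] at hx
      simp [hg, hx.2]
    refine Set.BijOn.union b1 b2 ?_
    intro x hx y hy hxy
    rcases hx with hx | hx <;> rcases hy with hy | hy
    · exact b1.injOn hx hy hxy
    · exfalso
      have h1 : g j x ∈ ↑(C' ∩ M (τ j)) := b1.mapsTo hx
      have h2 : g j y ∈ ↑(M (τ j) \ C') := b2.mapsTo hy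
      rw [hxy] at h1
      exact (Finset.mem_sdiff.mp h2).2 (Finset.mem_inter.mp h1).1
    · exfalso
      have h1 : g j x ∈ ↑(M (τ j) \ C') := b2.mapsTo hx
      have h2 : g j y ∈ ↑(C' ∩ M (τ j)) := b1.mapsTo hy
      rw [hxy] at h1
      exact (Finset.mem_sdiff.mp h1).2 (Finset.mem_inter.mp h2).1
    · exact b2.injOn hx hy hxy
  set π : α → α := fun x => if hx : ∃ j, x ∈ M j then g hx.choose x else x with hπ
  have hπeq : ∀ j, ∀ x ∈ M j, π x = g j x := by
    intro j x hx
    have hex : ∃ j', x ∈ M j' := ⟨j, hx⟩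
    have : hex.choose = j := huniqM x hex.choose j hex.choose_spec hx
    simp only [hπ, dif_pos hex, this]
  have hπBij : ∀ j, Set.BijOn π ↑(M j) ↑(M (τ j)) := by
    intro j
    exact (hgBij j).congr (fun x hx => (hπeq j x hx).symm)
  have himg : ∀ j, (M j).image π = M (τ j) := by
    intro j
    apply Finset.eq_of_subset_of_card_le
    · intro y hy
      obtain ⟨x, hx, rfl⟩ := Finset.mem_image.mp hy
      exact (hπBij j).mapsTo hx
    · rw [Finset.card_image_of_injOn (hπBij j).injOn, hcard, hcard]
  have hInj : Set.InjOn π ↑V := by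
    intro x hx y hy hxy
    obtain ⟨j, hxM⟩ := hmemV x hx
    obtain ⟨j', hyM⟩ := hmemV y hy
    have h1 : π x ∈ M (τ j) := (hπBij j).mapsTo hxM
    have h2 : π y ∈ M (τ j') := (hπBij j').mapsTo hyM
    rw [hxy] at h1
    have : τ j = τ j' := huniqM _ _ _ h1 h2
    have hjj : j = j' := τ.injective this
    subst hjj
    exact (hπBij j).injOn hxM hyM hxy
  have hCcard : ∀ (D : Finset α) (ρ : Equiv.Perm (Fin l)),
      D ⊆ V → (∀ i, (D ∩ M (ρ i)).card = a i) → D.card = ∑ i, a i := by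
    intro D ρ hDV hρ
    have hD : D = univ.biUnion (fun i => D ∩ M (ρ i)) := by
      ext x
      simp only [Finset.mem_biUnion, mem_univ, true_and, Finset.mem_inter]
      constructor
      · intro hx
        obtain ⟨j, hj⟩ := hmemV x (hDV hx)
        exact ⟨ρ.symm j, hx, by rwa [Equiv.apply_symm_apply]⟩
      · rintro ⟨i, hx, _⟩; exact hx
    rw [hD, Finset.card_biUnion]
    · exact Finset.sum_congr rfl (fun i _ => hρ i)
    · intro i _ j _ hij
      exact Finset.disjoint_of_subset_left Finset.inter_subset_right
        (Finset.disjoint_of_subset_right Finset.inter_subset_right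
          (hdisj (ρ i) (ρ j) (fun h => hij (ρ.injective h))))
  have himgC : C.image π = C' := by
    apply Finset.eq_of_subset_of_card_le
    · intro y hy
      obtain ⟨x, hx, rfl⟩ := Finset.mem_image.mp hy
      obtain ⟨j, hxM⟩ := hmemV x (hCV hx)
      have : π x = g j x := hπeq j x hxM
      rw [this]
      have : g j x = f1 j x := by simp [hg, hx]
      rw [this]
      have : f1 j x ∈ ↑(C' ∩ M (τ j)) := (hf1 j).mapsTo (by
        simp only [Finset.coe_inter, Set.mem_inter_iff, Finset.mem_coe]
        exact ⟨hx, hxM⟩)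
      exact (Finset.mem_inter.mp this).1
    · rw [Finset.card_image_of_injOn (hInj.mono (by exact_mod_cast hCV))]
      rw [hCcard C σ hCV hσ, hCcard C' σ' hC'V hσ']
  exact ⟨π, τ, hInj, himg, himgC⟩

theorem stmt_11 {α : Type*} [DecidableEq α] (k l : ℕ) (hk : 2 ≤ k) (hl : 2 ≤ l) (hlk : l ≤ k)
    (M : Fin l → Finset α)
    (hdisj : ∀ i j, i ≠ j → Disjoint (M i) (M j))
    (hcard : ∀ i, (M i).card = k)
    (V : Finset α) (hV : V = Finset.univ.biUnion M)
    (E : Finset (Finset α))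
    (hE : ∀ e ∈ E, e ⊆ V ∧ e.card = k)
    (hM : ∀ i, M i ∈ E)
    -- `{M_1, …, M_ℓ}` is the unique perfect matching of `H = (V, E)`:
    (huniq : ∀ P : Finset (Finset α),
      P ⊆ E → (∀ e ∈ P, ∀ e' ∈ P, e ≠ e' → Disjoint e e') → P.biUnion id = V →
        P = Finset.univ.image M)
    (a : Fin l → ℕ)
    (hmono : ∀ i j : Fin l, i ≤ j → a j ≤ a i)
    (hpos : ∀ i, 1 ≤ a i)
    (hsum : ∑ i, a i = k) :
    l * (E.filter
          (fun e => ∃ σ : Equiv.Perm (Fin l), ∀ i, (e ∩ M (σ i)).card = a i)).card ≤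
      (l - 1) * ((V.powersetCard k).filter
          (fun A => ∃ σ : Equiv.Perm (Fin l), ∀ i, (A ∩ M (σ i)).card = a i)).card := by
  classical
  haveI : NeZero l := ⟨by omega⟩
  have hk0 : 0 < k := by omega
  set TE := E.filter
      (fun e => ∃ σ : Equiv.Perm (Fin l), ∀ i, (e ∩ M (σ i)).card = a i) with hTEdef
  set G := (V.powersetCard k).filter
      (fun A => ∃ σ : Equiv.Perm (Fin l), ∀ i, (A ∩ M (σ i)).card = a i) with hGdef
  have huniqM : ∀ x (i j : Fin l), x ∈ M i → x ∈ M j → i = j := by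
    intro x i j hi hj
    by_contra hne
    exact Finset.disjoint_left.mp (hdisj i j hne) hi hj
  have hVcard : V.card = l * k := by
    rw [hV, Finset.card_biUnion (fun i _ j _ hij => hdisj i j hij)]
    rw [Finset.sum_congr rfl (fun i _ => hcard i), Finset.sum_const, smul_eq_mul,
      Finset.card_univ, Fintype.card_fin]
  have hGmem : ∀ A, A ∈ G ↔ A ⊆ V ∧ A.card = k ∧
      ∃ σ : Equiv.Perm (Fin l), ∀ i, (A ∩ M (σ i)).card = a i := by
    intro A
    rw [hGdef, Finset.mem_filter, Finset.mem_powersetCard]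
    tauto
  have hTEG : TE ⊆ G := by
    intro e he
    rw [hTEdef, Finset.mem_filter] at he
    exact (hGmem e).mpr ⟨(hE e he.1).1, (hE e he.1).2, he.2⟩
  set Cov := G.powerset.filter
      (fun P => (∀ e ∈ P, ∀ e' ∈ P, e ≠ e' → Disjoint e e') ∧ P.biUnion id = V) with hCovdef
  have hCovmem : ∀ P, P ∈ Cov ↔ P ⊆ G ∧
      (∀ e ∈ P, ∀ e' ∈ P, e ≠ e' → Disjoint e e') ∧ P.biUnion id = V := by
    intro P
    rw [hCovdef, Finset.mem_filter, Finset.mem_powerset]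
  have hPcard : ∀ P ∈ Cov, P.card = l := by
    intro P hP
    obtain ⟨hPG, hPd, hPU⟩ := (hCovmem P).mp hP
    have h1 : (P.biUnion id).card = ∑ e ∈ P, (id e).card :=
      Finset.card_biUnion (fun e he e' he' hee => hPd e he e' he' hee)
    rw [hPU, hVcard] at h1
    have h2 : ∑ e ∈ P, (id e).card = P.card * k := by
      calc ∑ e ∈ P, (id e).card = ∑ _e ∈ P, k :=
            Finset.sum_congr rfl (fun e he => ((hGmem e).mp (hPG he)).2.1)
        _ = P.card * k := by rw [Finset.sum_const, smul_eq_mul]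
    rw [h2] at h1
    exact Nat.eq_of_mul_eq_mul_right hk0 h1.symm
  have hnotE : ∀ P ∈ Cov, ∃ e ∈ P, e ∉ E := by
    intro P hP
    by_contra h
    push_neg at h
    obtain ⟨hPG, hPd, hPU⟩ := (hCovmem P).mp hP
    have hPM := huniq P h hPd hPU
    have hM0 : M 0 ∈ P := by
      rw [hPM]; exact Finset.mem_image_of_mem M (mem_univ 0)
    obtain ⟨_, _, σ, hσ⟩ := (hGmem (M 0)).mp (hPG hM0)
    have h10 : (1 : Fin l) ≠ 0 := by
      intro h
      have := congrArg Fin.val h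
      rw [Fin.val_one' l, Fin.val_zero, Nat.mod_eq_of_lt (by omega : 1 < l)] at this
      omega
    set i : Fin l := σ.symm 0 + 1 with hi
    have hne : (0 : Fin l) ≠ σ i := by
      intro h0
      have : σ.symm 0 = i := by rw [h0, Equiv.symm_apply_apply]
      rw [hi] at this
      have : (0 : Fin l) = 1 := by
        have := add_left_cancel (a := σ.symm 0) (by rw [← this, add_zero] :
          σ.symm 0 + 0 = σ.symm 0 + 1)
        exact this
      exact h10 this.symm
    have hzero : M 0 ∩ M (σ i) = ∅ :=
      Finset.disjoint_iff_inter_eq_empty.mp (hdisj 0 (σ i) hne)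
    have := hσ i
    rw [hzero, Finset.card_empty] at this
    have := hpos i
    omega
  set n : Finset α → ℕ := fun C => (Cov.filter (fun P => C ∈ P)).card with hn
  have hexist : ∀ C ∈ G, ∃ P ∈ Cov, C ∈ P := by
    intro C hC
    obtain ⟨hCV, hCk, σ, hσ⟩ := (hGmem C).mp hC
    obtain ⟨Cp, hCp0, hCpV, hCpk, hCptype, hCpdisj, hCpU⟩ :=
      exists_cover k l M hdisj hcard V hV a hsum C hCV σ hσ
    refine ⟨univ.image Cp, ?_, ?_⟩
    · rw [hCovmem]
      refine ⟨?_, ?_, ?_⟩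
      · intro e he
        obtain ⟨p, _, rfl⟩ := Finset.mem_image.mp he
        exact (hGmem _).mpr ⟨hCpV p, hCpk p, hCptype p⟩
      · intro e he e' he' hee
        obtain ⟨p, _, rfl⟩ := Finset.mem_image.mp he
        obtain ⟨q, _, rfl⟩ := Finset.mem_image.mp he'
        exact hCpdisj p q (fun h => hee (by rw [h]))
      · rw [Finset.image_biUnion]
        simpa using hCpU
    · rw [← hCp0]
      exact Finset.mem_image_of_mem Cp (mem_univ 0)
  have hconst : ∀ C ∈ G, ∀ C' ∈ G, n C ≤ n C' := by
    intro C hC C' hC'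
    obtain ⟨hCV, hCk, σ, hσ⟩ := (hGmem C).mp hC
    obtain ⟨hC'V, hC'k, σ', hσ'⟩ := (hGmem C').mp hC'
    obtain ⟨π, τ, hInj, himgM, himgC⟩ :=
      exists_transport k l M hdisj hcard V hV a C C' hCV hC'V σ σ' hσ hσ'
    have himgV : V.image π = V := by
      rw [hV, Finset.biUnion_image]
      ext x
      simp only [Finset.mem_biUnion, mem_univ, true_and]
      constructor
      · rintro ⟨j, hj⟩
        rw [himgM j] at hj
        exact ⟨τ j, hj⟩
      · rintro ⟨j, hj⟩
        refine ⟨τ.symm j, ?_⟩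
        rw [himgM (τ.symm j), Equiv.apply_symm_apply]
        exact hj
    have hsubimg : ∀ d : Finset α, d ⊆ V → d.image π ⊆ V := by
      intro d hd y hy
      obtain ⟨x, hx, rfl⟩ := Finset.mem_image.mp hy
      rw [← himgV]
      exact Finset.mem_image_of_mem π (hd hx)
    have hinj2 : ∀ d d' : Finset α, d ⊆ V → d' ⊆ V → d.image π = d'.image π → d = d' := by
      intro d d' hd hd' h
      ext x
      constructor
      · intro hx
        have : π x ∈ d'.image π := h ▸ Finset.mem_image_of_mem π hx
        obtain ⟨x', hx', he⟩ := Finset.mem_image.mp this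
        rwa [hInj (hd' hx') (hd hx) he] at hx'
      · intro hx
        have : π x ∈ d.image π := h.symm ▸ Finset.mem_image_of_mem π hx
        obtain ⟨x', hx', he⟩ := Finset.mem_image.mp this
        rwa [hInj (hd hx') (hd' hx) he] at hx'
    have hmemMj : ∀ x ∈ V, ∃ j, x ∈ M j := by
      intro x hx
      rw [hV] at hx
      obtain ⟨j, _, hj⟩ := Finset.mem_biUnion.mp hx
      exact ⟨j, hj⟩
    have hπM : ∀ (j : Fin l) x, x ∈ M j → π x ∈ M (τ j) := by
      intro j x hx
      rw [← himgM j]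
      exact Finset.mem_image_of_mem π hx
    have hkey : ∀ A : Finset α, A ⊆ V → ∀ j, (A.image π) ∩ M (τ j) = (A ∩ M j).image π := by
      intro A hA j
      ext y
      constructor
      · intro hy
        obtain ⟨hy1, hy2⟩ := Finset.mem_inter.mp hy
        obtain ⟨x, hx, rfl⟩ := Finset.mem_image.mp hy1
        obtain ⟨j', hj'⟩ := hmemMj x (hA hx)
        have h1 : π x ∈ M (τ j') := hπM j' x hj'
        have : τ j' = τ j := huniqM _ _ _ h1 hy2
        have : j' = j := τ.injective this
        subst this
        exact Finset.mem_image_of_mem π (Finset.mem_inter.mpr ⟨hx, hj'⟩)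
      · intro hy
        obtain ⟨x, hx, rfl⟩ := Finset.mem_image.mp hy
        obtain ⟨hx1, hx2⟩ := Finset.mem_inter.mp hx
        exact Finset.mem_inter.mpr ⟨Finset.mem_image_of_mem π hx1, hπM j x hx2⟩
    have hGimg : ∀ A ∈ G, A.image π ∈ G := by
      intro A hA
      obtain ⟨hAV, hAk, ρ, hρ⟩ := (hGmem A).mp hA
      refine (hGmem _).mpr ⟨hsubimg A hAV, ?_, ρ.trans τ, ?_⟩
      · rw [Finset.card_image_of_injOn (hInj.mono ?_), hAk]
        exact_mod_cast hAV
      · intro i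
        have : (A.image π) ∩ M (τ (ρ i)) = (A ∩ M (ρ i)).image π := hkey A hAV (ρ i)
        show ((A.image π) ∩ M (τ (ρ i))).card = a i
        rw [this, Finset.card_image_of_injOn
          (hInj.mono (by exact_mod_cast (Finset.inter_subset_left.trans hAV)))]
        exact hρ i
    rw [hn]
    apply Finset.card_le_card_of_injOn (fun P => P.image (fun d => d.image π))
    · intro P hP
      rw [Finset.mem_coe, Finset.mem_filter] at hP ⊢
      obtain ⟨hPC, hCP⟩ := hP
      obtain ⟨hPG, hPd, hPU⟩ := (hCovmem P).mp hPC
      have hPsubV : ∀ d ∈ P, d ⊆ V := fun d hd => ((hGmem d).mp (hPG hd)).1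
      constructor
      · rw [hCovmem]
        refine ⟨?_, ?_, ?_⟩
        · intro e he
          obtain ⟨d, hd, rfl⟩ := Finset.mem_image.mp he
          exact hGimg d (hPG hd)
        · intro e he e' he' hee
          obtain ⟨d, hd, rfl⟩ := Finset.mem_image.mp he
          obtain ⟨d', hd', rfl⟩ := Finset.mem_image.mp he'
          have hdd : d ≠ d' := fun h => hee (by rw [h])
          refine Finset.disjoint_left.mpr ?_
          intro y hy hy'
          obtain ⟨x, hx, rfl⟩ := Finset.mem_image.mp hy
          obtain ⟨x', hx', hxe⟩ := Finset.mem_image.mp hy'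
          have := hInj (hPsubV d' hd' hx') (hPsubV d hd hx) hxe
          rw [this] at hx'
          exact Finset.disjoint_left.mp (hPd d hd d' hd' hdd) hx hx'
        · have hbu : (P.image (fun d => d.image π)).biUnion id = (P.biUnion id).image π := by
            ext y
            simp only [Finset.mem_biUnion, Finset.mem_image, id]
            constructor
            · rintro ⟨e, ⟨d, hd, rfl⟩, hy⟩
              obtain ⟨x, hx, rfl⟩ := Finset.mem_image.mp hy
              exact ⟨x, ⟨d, hd, hx⟩, rfl⟩
            · rintro ⟨x, ⟨d, hd, hx⟩, rfl⟩
              exact ⟨d.image π, ⟨d, hd, rfl⟩, Finset.mem_image_of_mem π hx⟩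
          rw [hbu, hPU, himgV]
      · rw [← himgC]
        exact Finset.mem_image_of_mem _ hCP
    · intro P hP Q hQ h
      have h2 : P.image (fun d => d.image π) = Q.image (fun d => d.image π) := h
      rw [Finset.mem_coe, Finset.mem_filter] at hP hQ
      have hPG := ((hCovmem _).mp hP.1).1
      have hQG := ((hCovmem _).mp hQ.1).1
      ext d
      constructor
      · intro hd
        have : d.image π ∈ Q.image (fun d => d.image π) := by
          rw [← h2]; exact Finset.mem_image_of_mem _ hd
        obtain ⟨d', hd', he⟩ := Finset.mem_image.mp this
        rwa [hinj2 d' d (((hGmem d').mp (hQG hd')).1) (((hGmem d).mp (hPG hd)).1) he] at hd'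
      · intro hd
        have : d.image π ∈ P.image (fun d => d.image π) := by
          rw [h2]; exact Finset.mem_image_of_mem _ hd
        obtain ⟨d', hd', he⟩ := Finset.mem_image.mp this
        rwa [hinj2 d' d (((hGmem d').mp (hPG hd')).1) (((hGmem d).mp (hQG hd)).1) he] at hd'
  -- counting
  have hswap : ∀ S : Finset (Finset α),
      ∑ C ∈ S, n C = ∑ P ∈ Cov, (S.filter (fun A => A ∈ P)).card := by
    intro S
    calc ∑ C ∈ S, n C = ∑ C ∈ S, ∑ P ∈ Cov, if C ∈ P then 1 else 0 := by
          refine Finset.sum_congr rfl fun C _ => ?_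
          show (Cov.filter (fun P => C ∈ P)).card = _
          rw [Finset.card_filter]
      _ = ∑ P ∈ Cov, ∑ C ∈ S, if C ∈ P then 1 else 0 := Finset.sum_comm
      _ = ∑ P ∈ Cov, (S.filter (fun A => A ∈ P)).card := by
          refine Finset.sum_congr rfl fun P _ => ?_
          rw [Finset.card_filter]
  have hsumG : ∑ C ∈ G, n C = Cov.card * l := by
    rw [hswap G]
    have heach : ∀ P ∈ Cov, (G.filter (fun A => A ∈ P)).card = l := by
      intro P hP
      have hPG := ((hCovmem P).mp hP).1
      have : G.filter (fun A => A ∈ P) = P := by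
        ext A
        simp only [Finset.mem_filter]
        exact ⟨fun h => h.2, fun h => ⟨hPG h, h⟩⟩
      rw [this, hPcard P hP]
    rw [Finset.sum_congr rfl heach, Finset.sum_const, smul_eq_mul]
  have hsumTE : ∑ C ∈ TE, n C ≤ Cov.card * (l - 1) := by
    rw [hswap TE]
    refine le_trans (Finset.sum_le_sum ?_) (by rw [Finset.sum_const, smul_eq_mul])
    intro P hP
    obtain ⟨e₀, he₀P, he₀E⟩ := hnotE P hP
    have hsub : TE.filter (fun A => A ∈ P) ⊆ P.erase e₀ := by
      intro A hA
      rw [Finset.mem_filter] at hA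
      refine Finset.mem_erase.mpr ⟨?_, hA.2⟩
      intro h
      apply he₀E
      rw [← h]
      exact Finset.mem_of_mem_filter A hA.1
    calc (TE.filter (fun A => A ∈ P)).card ≤ (P.erase e₀).card := Finset.card_le_card hsub
      _ = P.card - 1 := Finset.card_erase_of_mem he₀P
      _ = l - 1 := by rw [hPcard P hP]
  rcases Finset.eq_empty_or_nonempty TE with hTEe | ⟨C₀, hC₀⟩
  · rw [hTEe]
    simp
  · have hC₀G := hTEG hC₀
    have hNall : ∀ C ∈ G, n C = n C₀ :=
      fun C hC => le_antisymm (hconst C hC C₀ hC₀G) (hconst C₀ hC₀G C hC)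
    have hN1 : 1 ≤ n C₀ := by
      obtain ⟨P, hP, hCP⟩ := hexist C₀ hC₀G
      rw [hn]
      exact Finset.card_pos.mpr ⟨P, Finset.mem_filter.mpr ⟨hP, hCP⟩⟩
    have e1 : G.card * n C₀ = Cov.card * l := by
      rw [← hsumG, Finset.sum_congr rfl hNall, Finset.sum_const, smul_eq_mul]
    have e2 : TE.card * n C₀ ≤ Cov.card * (l - 1) := by
      have : ∑ C ∈ TE, n C = TE.card * n C₀ := by
        rw [Finset.sum_congr rfl (fun C hC => hNall C (hTEG hC)), Finset.sum_const,
          smul_eq_mul]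
      rw [← this]
      exact hsumTE
    have hfin : (l * TE.card) * n C₀ ≤ ((l - 1) * G.card) * n C₀ := by
      calc (l * TE.card) * n C₀ = l * (TE.card * n C₀) := by ring
        _ ≤ l * (Cov.card * (l - 1)) := Nat.mul_le_mul_left _ e2
        _ = (l - 1) * (Cov.card * l) := by ring
        _ = (l - 1) * (G.card * n C₀) := by rw [e1]
        _ = ((l - 1) * G.card) * n C₀ := by ring
    exact Nat.le_of_mul_le_mul_right hfin (by omega)
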